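/- Let H be a finite dimensional quasi-Hopf algebra, μ ∈ H* the distinguished grouplike element defined by th = μ(h)t for t ∈ ∫ₗ, and E: H* → 𝓛 the Hausser-Nill projection onto the space of left cointegrals. Then for all h* ∈ H* and h ∈ H: E(h* ↽ S⁻¹(h)) = μ(h) E(h*), where (h* ↽ h)(h') = h*(hh'). -/

import Mathlib

set_option autoImplicit false

open TensorProduct

/-- A quasi-bialgebra in the sense of Drinfeld. The reassociator `Phi` lives in
`H ⊗ (H ⊗ H)`, and `(Δ ⊗ id)` is transported along the associator. -/
structure QuasiBialgebra (k H : Type*) [Field k] [Ring H] [Algebra k H] where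
  comul : H →ₐ[k] H ⊗[k] H
  counit : H →ₐ[k] k
  Phi : H ⊗[k] (H ⊗[k] H)
  PhiInv : H ⊗[k] (H ⊗[k] H)
  Phi_invertible : Phi * PhiInv = 1
  invertible_Phi : PhiInv * Phi = 1
  quasi_coassoc : ∀ h : H,
    (Algebra.TensorProduct.map (AlgHom.id k H) comul) (comul h) * Phi
      = Phi * (Algebra.TensorProduct.assoc k k k H H H)
          ((Algebra.TensorProduct.map comul (AlgHom.id k H)) (comul h))
  counit_right : ∀ h : H,
    (Algebra.TensorProduct.map (AlgHom.id k H) counit) (comul h) = h ⊗ₜ[k] 1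
  counit_left : ∀ h : H,
    (Algebra.TensorProduct.map counit (AlgHom.id k H)) (comul h) = 1 ⊗ₜ[k] h
  pentagon :
    (1 ⊗ₜ[k] Phi)
      * (Algebra.TensorProduct.map (AlgHom.id k H)
          ((Algebra.TensorProduct.assoc k k k H H H).toAlgHom.comp
            (Algebra.TensorProduct.map comul (AlgHom.id k H)))) Phi
      * (Algebra.TensorProduct.map (AlgHom.id k H)
            (Algebra.TensorProduct.assoc k k k H H H).toAlgHom)
          ((Algebra.TensorProduct.assoc k k k H (H ⊗[k] H) H) (Phi ⊗ₜ[k] 1))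
    = (Algebra.TensorProduct.map (AlgHom.id k H)
        (Algebra.TensorProduct.map (AlgHom.id k H) comul)) Phi
      * (Algebra.TensorProduct.assoc k k k H H (H ⊗[k] H))
          ((Algebra.TensorProduct.map comul (AlgHom.id k (H ⊗[k] H))) Phi)
  counit_mid_Phi :
    (Algebra.TensorProduct.map (AlgHom.id k H)
      (Algebra.TensorProduct.map counit (AlgHom.id k H))) Phi = 1

/-- A quasi-Hopf algebra: a quasi-bialgebra with an algebra anti-homomorphism `S`
and elements `alpha`, `beta` satisfying Drinfeld's antipode axioms.  Bijectivity
of `S` is *not* assumed. -/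
structure QuasiHopfAlgebra (k H : Type*) [Field k] [Ring H] [Algebra k H] extends
    QuasiBialgebra k H where
  S : H →ₗ[k] H
  alpha : H
  beta : H
  S_one : S 1 = 1
  S_mul : ∀ a b : H, S (a * b) = S b * S a
  antipode_left : ∀ h : H,
    (LinearMap.mul' k H)
      ((TensorProduct.map ((LinearMap.mulRight k alpha) ∘ₗ S) LinearMap.id) (comul h))
      = counit h • alpha
  antipode_right : ∀ h : H,
    (LinearMap.mul' k H)
      ((TensorProduct.map LinearMap.id ((LinearMap.mulLeft k beta) ∘ₗ S)) (comul h))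
      = counit h • beta
  antipode_Phi :
    (LinearMap.mul' k H)
      ((TensorProduct.map LinearMap.id
        ((LinearMap.mul' k H) ∘ₗ (TensorProduct.map
          ((LinearMap.mulRight k alpha) ∘ₗ ((LinearMap.mulLeft k beta) ∘ₗ S))
          LinearMap.id))) Phi) = 1
  antipode_PhiInv :
    (LinearMap.mul' k H)
      ((TensorProduct.map ((LinearMap.mulRight k alpha) ∘ₗ S)
        ((LinearMap.mul' k H) ∘ₗ (TensorProduct.map (LinearMap.mulRight k beta) S)))
        PhiInv) = 1

namespace QuasiHopfAlgebra

variable {k H : Type*} [Field k] [Ring H] [Algebra k H] (Q : QuasiHopfAlgebra k H)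

/-- The space of left integrals in `H`. -/
def leftIntegrals : Submodule k H where
  carrier := {t | ∀ h : H, h * t = Q.counit h • t}
  add_mem' := by intro a b ha hb h; rw [mul_add, ha h, hb h, smul_add]
  zero_mem' := by intro h; simp
  smul_mem' := by intro c x hx h; rw [mul_smul_comm, hx h, smul_comm]

/-- The space of right integrals in `H`. -/
def rightIntegrals : Submodule k H where
  carrier := {t | ∀ h : H, t * h = Q.counit h • t}
  add_mem' := by intro a b ha hb h; rw [add_mul, ha h, hb h, smul_add]
  zero_mem' := by intro h; simp
  smul_mem' := by intro c x hx h; rw [smul_mul_assoc, hx h, smul_comm]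

/-- The element `p_R = ∑ x¹ ⊗ x² β S(x³)`. -/
noncomputable def pR : H ⊗[k] H :=
  (TensorProduct.map LinearMap.id
    ((LinearMap.mul' k H) ∘ₗ (TensorProduct.map (LinearMap.mulRight k Q.beta) Q.S)))
    Q.PhiInv

/-- The element `∑ X¹ t₁ ⊗ S(X² t₂) α X³` built from a (left integral) `t`. -/
noncomputable def Tel (t : H) : H ⊗[k] H :=
  (TensorProduct.map LinearMap.id
    ((LinearMap.mul' k H) ∘ₗ
      (TensorProduct.map ((LinearMap.mulRight k Q.alpha) ∘ₗ Q.S) LinearMap.id)))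
    (Q.Phi * (Algebra.TensorProduct.assoc k k k H H H) (Q.comul t ⊗ₜ[k] 1))

end QuasiHopfAlgebra

namespace QuasiHopfAlgebra

variable {k H : Type*} [Field k] [Ring H] [Algebra k H] (Q : QuasiHopfAlgebra k H)

/-- The map `e ↦ ∑ X¹e₁ ⊗ β S(S(X²e₂) α X³)`. -/
noncomputable def Amap : H →ₗ[k] H ⊗[k] H :=
  (TensorProduct.map LinearMap.id
      ((LinearMap.mulLeft k Q.beta) ∘ₗ Q.S ∘ₗ (LinearMap.mul' k H) ∘ₗ
        (TensorProduct.map ((LinearMap.mulRight k Q.alpha) ∘ₗ Q.S) LinearMap.id))) ∘ₗ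
    (LinearMap.mulLeft k Q.Phi) ∘ₗ
    (Algebra.TensorProduct.assoc k k k H H H).toLinearMap ∘ₗ
    ((TensorProduct.mk k (H ⊗[k] H) H).flip 1) ∘ₗ
    Q.comul.toLinearMap

/-- The Panaite–Van Oystaeyen projection
`P(h) = ∑ᵢ ⟨eⁱ, β S(S(X²(eᵢ)₂) α X³) h⟩ X¹ (eᵢ)₁` onto the space of left
integrals, written via the coevaluation element `∑ᵢ eᵢ ⊗ eⁱ`. -/
noncomputable def P [FiniteDimensional k H] (h : H) : H :=
  (TensorProduct.rid k H)
    ((TensorProduct.map LinearMap.id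
        ((contractRight k H) ∘ₗ
          (TensorProduct.map (LinearMap.mulRight k h) LinearMap.id)))
      ((TensorProduct.assoc k H H (Module.Dual k H))
        ((TensorProduct.map Q.Amap LinearMap.id) (coevaluation k H 1))))

end QuasiHopfAlgebra

set_option maxHeartbeats 1000000
set_option synthInstance.maxHeartbeats 400000

namespace QHAProofAux

open TensorProduct QuasiHopfAlgebra

variable {k H : Type*} [Field k] [Ring H] [Algebra k H] (Q : QuasiHopfAlgebra k H)

/-- second-leg map `a ⊗ b ↦ S(a) α b`. -/
noncomputable def Jm : H ⊗[k] H →ₗ[k] H :=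
  (LinearMap.mul' k H) ∘ₗ
    (TensorProduct.map ((LinearMap.mulRight k Q.alpha) ∘ₗ Q.S) LinearMap.id)

/-- `F = id ⊗ Jm` on `H ⊗ (H ⊗ H)`. -/
noncomputable def Fm : H ⊗[k] (H ⊗[k] H) →ₗ[k] H ⊗[k] H :=
  TensorProduct.map LinearMap.id (Jm Q)

/-- `G = id ⊗ (β S(-))`. -/
noncomputable def Gm : H ⊗[k] H →ₗ[k] H ⊗[k] H :=
  TensorProduct.map LinearMap.id ((LinearMap.mulLeft k Q.beta) ∘ₗ Q.S)

@[simp] lemma Jm_tmul (a b : H) : Jm Q (a ⊗ₜ[k] b) = Q.S a * Q.alpha * b := by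
  simp [Jm, mul_assoc]

@[simp] lemma Fm_tmul (a : H) (z : H ⊗[k] H) : Fm Q (a ⊗ₜ[k] z) = a ⊗ₜ[k] Jm Q z := by
  simp [Fm]

@[simp] lemma Gm_tmul (a b : H) : Gm Q (a ⊗ₜ[k] b) = a ⊗ₜ[k] (Q.beta * Q.S b) := by
  simp [Gm]

end QHAProofAux
namespace QHAProofAux

variable {k H : Type*} [Field k] [Ring H] [Algebra k H] (Q : QuasiHopfAlgebra k H)

lemma Jm_comul (h : H) : Jm Q (Q.comul h) = Q.counit h • Q.alpha := by
  have := Q.antipode_left h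
  simpa [Jm] using this

/-- Lemma A: `F((id ⊗ Δ)(Δ g)) = g ⊗ α`. -/
lemma Fm_M (g : H) :
    Fm Q ((Algebra.TensorProduct.map (AlgHom.id k H) Q.comul) (Q.comul g))
      = g ⊗ₜ[k] Q.alpha := by
  have key : ∀ x : H ⊗[k] H,
      Fm Q ((Algebra.TensorProduct.map (AlgHom.id k H) Q.comul) x)
        = (TensorProduct.map LinearMap.id
            ((LinearMap.toSpanSingleton k H Q.alpha) ∘ₗ Q.counit.toLinearMap)) x := by
    intro x
    induction x using TensorProduct.induction_on with
    | zero => simp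
    | tmul a b =>
        simp only [Algebra.TensorProduct.map_tmul, AlgHom.coe_id, id_eq, Fm_tmul,
          TensorProduct.map_tmul, LinearMap.coe_comp, Function.comp_apply,
          LinearMap.id_coe, AlgHom.toLinearMap_apply, LinearMap.toSpanSingleton_apply]
        rw [Jm_comul]
    | add x y hx hy => simp [map_add, hx, hy]
  rw [key]
  have h2 : (TensorProduct.map (LinearMap.id (M := H)) Q.counit.toLinearMap) (Q.comul g)
      = g ⊗ₜ[k] (1 : k) := by
    have := Q.counit_right g
    have e : ∀ x : H ⊗[k] H,
        (Algebra.TensorProduct.map (AlgHom.id k H) Q.counit) x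
          = (TensorProduct.map LinearMap.id Q.counit.toLinearMap) x := by
      intro x
      induction x using TensorProduct.induction_on with
      | zero => simp
      | tmul a b => simp
      | add x y hx hy => simp [map_add, hx, hy]
    rw [← e, this]
  have h3 : (TensorProduct.map (LinearMap.id (M := H))
      ((LinearMap.toSpanSingleton k H Q.alpha) ∘ₗ Q.counit.toLinearMap)) (Q.comul g)
      = (TensorProduct.map LinearMap.id (LinearMap.toSpanSingleton k H Q.alpha))
          ((TensorProduct.map LinearMap.id Q.counit.toLinearMap) (Q.comul g)) := by
    induction Q.comul g using TensorProduct.induction_on with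
    | zero => simp
    | tmul a b => simp
    | add x y hx hy => simp [map_add, hx, hy]
  rw [h3, h2]
  simp

end QHAProofAux
namespace QHAProofAux

variable {k H : Type*} [Field k] [Ring H] [Algebra k H] (Q : QuasiHopfAlgebra k H)

/-- `F(W * (a ⊗ b ⊗ c)) = (· a ⊗ S(b)·c) (F W)`. -/
lemma Fm_mul_pure (W : H ⊗[k] (H ⊗[k] H)) (a b c : H) :
    Fm Q (W * (a ⊗ₜ[k] (b ⊗ₜ[k] c)))
      = (TensorProduct.map (LinearMap.mulRight k a)
          ((LinearMap.mulLeft k (Q.S b)) ∘ₗ (LinearMap.mulRight k c))) (Fm Q W) := by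
  induction W using TensorProduct.induction_on with
  | zero => simp
  | tmul u z =>
      induction z using TensorProduct.induction_on with
      | zero => simp
      | tmul v w =>
          simp only [Algebra.TensorProduct.tmul_mul_tmul, Fm_tmul, Jm_tmul,
            TensorProduct.map_tmul, LinearMap.mulRight_apply, LinearMap.coe_comp,
            Function.comp_apply, LinearMap.mulLeft_apply, Q.S_mul]
          simp only [mul_assoc]
      | add z₁ z₂ h₁ h₂ =>
          rw [TensorProduct.tmul_add, add_mul, map_add, h₁, h₂, map_add, map_add]
  | add W₁ W₂ h₁ h₂ => rw [add_mul, map_add, h₁, h₂, map_add, map_add]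

/-- Lemma B: `F((id⊗Δ)(Δg) * Z) = (g ⊗ 1) * F Z`. -/
lemma Fm_M_mul (g : H) (Z : H ⊗[k] (H ⊗[k] H)) :
    Fm Q ((Algebra.TensorProduct.map (AlgHom.id k H) Q.comul) (Q.comul g) * Z)
      = (g ⊗ₜ[k] (1 : H)) * Fm Q Z := by
  induction Z using TensorProduct.induction_on with
  | zero => simp
  | tmul a z =>
      induction z using TensorProduct.induction_on with
      | zero => simp
      | tmul b c =>
          rw [Fm_mul_pure, Fm_M]
          simp [mul_assoc]
      | add z₁ z₂ h₁ h₂ =>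
          rw [TensorProduct.tmul_add, mul_add, map_add, h₁, h₂, map_add, mul_add]
  | add W₁ W₂ h₁ h₂ => rw [mul_add, map_add, h₁, h₂, map_add, mul_add]

/-- Lemma D: `F(W * (1 ⊗ 1 ⊗ d)) = F W * (1 ⊗ d)`. -/
lemma Fm_mul_unit (W : H ⊗[k] (H ⊗[k] H)) (d : H) :
    Fm Q (W * ((1:H) ⊗ₜ[k] ((1:H) ⊗ₜ[k] d))) = Fm Q W * ((1:H) ⊗ₜ[k] d) := by
  rw [Fm_mul_pure]
  induction Fm Q W using TensorProduct.induction_on with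
  | zero => simp
  | tmul u v => simp [Q.S_one]
  | add x y hx hy => rw [map_add, hx, hy, add_mul]

/-- Lemma E: `G(W * (1 ⊗ d)) = (id ⊗ (β S(d) S(-))) W`. -/
lemma Gm_mul_unit (W : H ⊗[k] H) (d : H) :
    Gm Q (W * ((1:H) ⊗ₜ[k] d))
      = (TensorProduct.map LinearMap.id
          ((LinearMap.mulLeft k (Q.beta * Q.S d)) ∘ₗ Q.S)) W := by
  induction W using TensorProduct.induction_on with
  | zero => simp
  | tmul u v => simp [Q.S_mul, mul_assoc]
  | add x y hx hy => rw [add_mul, map_add, hx, hy, map_add]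

/-- `(g ⊗ 1) * G W = G ((g ⊗ 1) * W)`. -/
lemma Gm_left_mul (g : H) (W : H ⊗[k] H) :
    (g ⊗ₜ[k] (1:H)) * Gm Q W = Gm Q ((g ⊗ₜ[k] (1:H)) * W) := by
  induction W using TensorProduct.induction_on with
  | zero => simp
  | tmul u v => simp
  | add x y hx hy => rw [mul_add, map_add, mul_add, hx, hy, map_add]

/-- `(1 ⊗ c) * (id ⊗ (z S(-))) W = (id ⊗ (c z S(-))) W`. -/
lemma one_tmul_mul_mapS (c z : H) (W : H ⊗[k] H) :
    ((1:H) ⊗ₜ[k] c) * (TensorProduct.map LinearMap.id ((LinearMap.mulLeft k z) ∘ₗ Q.S)) W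
      = (TensorProduct.map LinearMap.id ((LinearMap.mulLeft k (c * z)) ∘ₗ Q.S)) W := by
  induction W using TensorProduct.induction_on with
  | zero => simp
  | tmul u v => simp [mul_assoc]
  | add x y hx hy => rw [map_add, mul_add, hx, hy, map_add]

end QHAProofAux
namespace QHAProofAux

variable {k H : Type*} [Field k] [Ring H] [Algebra k H] (Q : QuasiHopfAlgebra k H)

/-- The bundled bilinear pairing `θ x f W`, with `θ x f (u ⊗ v) = f (v * x) • u`. -/
noncomputable def thetaB (x : H) :
    Module.Dual k H →ₗ[k] (H ⊗[k] H) →ₗ[k] H := by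
  refine LinearMap.mk₂ k (fun f W => (TensorProduct.rid k H)
      ((TensorProduct.map LinearMap.id (f ∘ₗ LinearMap.mulRight k x)) W)) ?_ ?_ ?_ ?_
  · intro f g W
    induction W using TensorProduct.induction_on with
    | zero => simp
    | tmul u v => simp [TensorProduct.tmul_add, add_smul]
    | add a b ha hb => simp only [map_add] at *; rw [ha, hb]; abel
  · intro c f W
    induction W using TensorProduct.induction_on with
    | zero => simp
    | tmul u v => simp [TensorProduct.tmul_smul, smul_smul]
    | add a b ha hb => simp only [map_add] at *; rw [ha, hb, smul_add]
  · intro f W₁ W₂; simp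
  · intro c f W; simp

@[simp] lemma thetaB_tmul (x : H) (f : Module.Dual k H) (u v : H) :
    thetaB (k := k) x f (u ⊗ₜ[k] v) = f (v * x) • u := by
  simp [thetaB]

lemma mul_thetaB (x g : H) (f : Module.Dual k H) (W : H ⊗[k] H) :
    g * thetaB (k := k) x f W = thetaB (k := k) x f ((g ⊗ₜ[k] (1:H)) * W) := by
  induction W using TensorProduct.induction_on with
  | zero => simp
  | tmul u v => simp [mul_smul_comm]
  | add a b ha hb => rw [map_add, mul_add, ha, hb, mul_add, map_add]

lemma thetaB_mulLeft (x c : H) (f : Module.Dual k H) (W : H ⊗[k] H) :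
    thetaB (k := k) x (f ∘ₗ LinearMap.mulLeft k c) W
      = thetaB (k := k) x f (((1:H) ⊗ₜ[k] c) * W) := by
  induction W using TensorProduct.induction_on with
  | zero => simp
  | tmul u v => simp [mul_assoc]
  | add a b ha hb => rw [map_add, ha, hb, mul_add, map_add]

end QHAProofAux
namespace QHAProofAux

variable {k H : Type*} [Field k] [Ring H] [Algebra k H] (Q : QuasiHopfAlgebra k H)

/-- `Km e = F(Φ * (Δe ⊗ 1))`. -/
noncomputable def Km : H →ₗ[k] H ⊗[k] H :=
  Fm Q ∘ₗ (LinearMap.mulLeft k Q.Phi) ∘ₗ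
    (Algebra.TensorProduct.assoc k k k H H H).toLinearMap ∘ₗ
    ((TensorProduct.mk k (H ⊗[k] H) H).flip 1) ∘ₗ Q.comul.toLinearMap

lemma Km_apply (e : H) :
    Km Q e = Fm Q (Q.Phi * (Algebra.TensorProduct.assoc k k k H H H) (Q.comul e ⊗ₜ[k] (1:H))) := by
  simp [Km, LinearMap.mulLeft_apply]
  rfl

lemma Gm_Fm (W : H ⊗[k] (H ⊗[k] H)) :
    Gm Q (Fm Q W)
      = (TensorProduct.map LinearMap.id
          ((LinearMap.mulLeft k Q.beta) ∘ₗ Q.S ∘ₗ Jm Q)) W := by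
  induction W using TensorProduct.induction_on with
  | zero => simp
  | tmul a z => simp
  | add a b ha hb => rw [map_add, map_add, ha, hb, map_add]

lemma Amap_eq (e : H) : Q.Amap e = Gm Q (Km Q e) := by
  rw [Km_apply, Gm_Fm]
  rfl

end QHAProofAux
namespace QHAProofAux

variable {k H : Type*} [Field k] [Ring H] [Algebra k H] [FiniteDimensional k H]
  (Q : QuasiHopfAlgebra k H)

lemma P_term (x : H) (W : H ⊗[k] H) (f : Module.Dual k H) :
    (TensorProduct.rid k H)
      ((TensorProduct.map LinearMap.id
          ((contractRight k H) ∘ₗ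
            (TensorProduct.map (LinearMap.mulRight k x) LinearMap.id)))
        ((TensorProduct.assoc k H H (Module.Dual k H)) (W ⊗ₜ[k] f)))
      = thetaB (k := k) x f W := by
  induction W using TensorProduct.induction_on with
  | zero => simp
  | tmul u v => simp [contractRight_apply]
  | add a b ha hb =>
      rw [TensorProduct.add_tmul, map_add, map_add, map_add, ha, hb, map_add]

lemma P_expand (x : H) :
    Q.P x = ∑ i : Module.Basis.ofVectorSpaceIndex k H,
      thetaB (k := k) x ((Module.Basis.ofVectorSpace k H).coord i)
        (Q.Amap ((Module.Basis.ofVectorSpace k H) i)) := by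
  rw [QuasiHopfAlgebra.P, coevaluation_apply_one]
  rw [map_sum, map_sum, map_sum, map_sum]
  refine Finset.sum_congr rfl fun i _ => ?_
  rw [TensorProduct.map_tmul]
  exact P_term x _ _

/-- Dual-basis swap: `∑ᵢ θ x bⁱ (K (c bᵢ)) = ∑ᵢ θ x (bⁱ ∘ (c·)) (K bᵢ)`. -/
lemma db (x c : H) (K : H →ₗ[k] H ⊗[k] H) :
    (∑ i : Module.Basis.ofVectorSpaceIndex k H,
      thetaB (k := k) x ((Module.Basis.ofVectorSpace k H).coord i)
        (K (c * (Module.Basis.ofVectorSpace k H) i)))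
    = ∑ i : Module.Basis.ofVectorSpaceIndex k H,
      thetaB (k := k) x (((Module.Basis.ofVectorSpace k H).coord i) ∘ₗ LinearMap.mulLeft k c)
        (K ((Module.Basis.ofVectorSpace k H) i)) := by
  set b := Module.Basis.ofVectorSpace k H with hb
  have lhs : ∀ i, thetaB (k := k) x (b.coord i) (K (c * b i))
      = ∑ j : Module.Basis.ofVectorSpaceIndex k H,
          b.repr (c * b i) j • thetaB (k := k) x (b.coord i) (K (b j)) := by
    intro i
    conv_lhs => rw [← Module.Basis.sum_repr b (c * b i)]
    rw [map_sum, map_sum]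
    refine Finset.sum_congr rfl fun j _ => ?_
    rw [map_smul, map_smul]
  have rhs : ∀ i, thetaB (k := k) x ((b.coord i) ∘ₗ LinearMap.mulLeft k c) (K (b i))
      = ∑ j : Module.Basis.ofVectorSpaceIndex k H,
          b.repr (c * b j) i • thetaB (k := k) x (b.coord j) (K (b i)) := by
    intro i
    have hf : ((b.coord i) ∘ₗ LinearMap.mulLeft k c)
        = ∑ j : Module.Basis.ofVectorSpaceIndex k H,
            b.repr (c * b j) i • b.coord j := by
      rw [← Module.Basis.sum_dual_apply_smul_coord b ((b.coord i) ∘ₗ LinearMap.mulLeft k c)]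
      refine Finset.sum_congr rfl fun j _ => ?_
      simp [Module.Basis.coord_apply]
    rw [hf, map_sum, LinearMap.sum_apply]
    refine Finset.sum_congr rfl fun j _ => ?_
    rw [map_smul, LinearMap.smul_apply]
  calc (∑ i, thetaB (k := k) x (b.coord i) (K (c * b i)))
      = ∑ i, ∑ j, b.repr (c * b i) j • thetaB (k := k) x (b.coord i) (K (b j)) := by
        exact Finset.sum_congr rfl fun i _ => lhs i
    _ = ∑ j, ∑ i, b.repr (c * b i) j • thetaB (k := k) x (b.coord i) (K (b j)) :=
        Finset.sum_comm
    _ = ∑ i, thetaB (k := k) x ((b.coord i) ∘ₗ LinearMap.mulLeft k c) (K (b i)) := by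
        refine Finset.sum_congr rfl fun j _ => (rhs j).symm

end QHAProofAux
namespace QHAProofAux

variable {k H : Type*} [Field k] [Ring H] [Algebra k H] [FiniteDimensional k H]
  (Q : QuasiHopfAlgebra k H)

/-- `Ω x z = ∑ᵢ θ x bⁱ ((id ⊗ z·S(-)) (Km bᵢ))`. -/
noncomputable def Omega (x z : H) : H :=
  ∑ i : Module.Basis.ofVectorSpaceIndex k H,
    thetaB (k := k) x ((Module.Basis.ofVectorSpace k H).coord i)
      ((TensorProduct.map LinearMap.id ((LinearMap.mulLeft k z) ∘ₗ Q.S))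
        (Km Q ((Module.Basis.ofVectorSpace k H) i)))

lemma mapS_add (z z' : H) (W : H ⊗[k] H) :
    (TensorProduct.map LinearMap.id ((LinearMap.mulLeft k (z + z')) ∘ₗ Q.S)) W
      = (TensorProduct.map LinearMap.id ((LinearMap.mulLeft k z) ∘ₗ Q.S)) W
        + (TensorProduct.map LinearMap.id ((LinearMap.mulLeft k z') ∘ₗ Q.S)) W := by
  induction W using TensorProduct.induction_on with
  | zero => simp
  | tmul u v => simp [add_mul, TensorProduct.tmul_add]
  | add a b ha hb => rw [map_add, ha, hb, map_add, map_add]; abel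

lemma mapS_smul (c : k) (z : H) (W : H ⊗[k] H) :
    (TensorProduct.map LinearMap.id ((LinearMap.mulLeft k (c • z)) ∘ₗ Q.S)) W
      = c • (TensorProduct.map LinearMap.id ((LinearMap.mulLeft k z) ∘ₗ Q.S)) W := by
  induction W using TensorProduct.induction_on with
  | zero => simp
  | tmul u v => simp [smul_mul_assoc, TensorProduct.tmul_smul]
  | add a b ha hb => rw [map_add, ha, hb, map_add, smul_add]

lemma Omega_add (x z z' : H) : Omega Q x (z + z') = Omega Q x z + Omega Q x z' := by
  rw [Omega, Omega, Omega, ← Finset.sum_add_distrib]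
  refine Finset.sum_congr rfl fun i _ => ?_
  rw [mapS_add, map_add]

lemma Omega_smul (x : H) (c : k) (z : H) : Omega Q x (c • z) = c • Omega Q x z := by
  rw [Omega, Omega, Finset.smul_sum]
  refine Finset.sum_congr rfl fun i _ => ?_
  rw [mapS_smul, map_smul]

lemma Omega_beta (x : H) : Omega Q x Q.beta = Q.P x := by
  rw [Omega, P_expand]
  refine Finset.sum_congr rfl fun i _ => ?_
  rw [Amap_eq]
  rfl

/-- The central claim: `∑ᵢ θ x bⁱ (G(F(Φ * (Δ ⊗ id)(D * (bᵢ ⊗ 1))))) = Ω x (m(G D))`. -/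
lemma claim2 (x : H) (D : H ⊗[k] H) :
    (∑ i : Module.Basis.ofVectorSpaceIndex k H,
      thetaB (k := k) x ((Module.Basis.ofVectorSpace k H).coord i)
        (Gm Q (Fm Q (Q.Phi * (Algebra.TensorProduct.assoc k k k H H H)
          ((Algebra.TensorProduct.map Q.comul (AlgHom.id k H))
            (D * ((Module.Basis.ofVectorSpace k H) i ⊗ₜ[k] (1:H))))))))
    = Omega Q x (LinearMap.mul' k H (Gm Q D)) := by
  set b := Module.Basis.ofVectorSpace k H with hb
  induction D using TensorProduct.induction_on with
  | zero =>
      have h0 : Omega Q x (0 : H) = 0 := by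
        have h := Omega_add Q x 0 0
        rw [add_zero] at h
        exact (right_eq_add.mp h)
      simp [h0]
  | tmul c d =>
      have step : ∀ i : Module.Basis.ofVectorSpaceIndex k H,
          Gm Q (Fm Q (Q.Phi * (Algebra.TensorProduct.assoc k k k H H H)
            ((Algebra.TensorProduct.map Q.comul (AlgHom.id k H))
              ((c ⊗ₜ[k] d) * (b i ⊗ₜ[k] (1:H))))))
          = (TensorProduct.map LinearMap.id
              ((LinearMap.mulLeft k (Q.beta * Q.S d)) ∘ₗ Q.S)) (Km Q (c * b i)) := by
        intro i
        rw [Algebra.TensorProduct.tmul_mul_tmul, mul_one, Algebra.TensorProduct.map_tmul]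
        have hsplit : (Q.comul (c * b i) ⊗ₜ[k] ((AlgHom.id k H) d) : (H ⊗[k] H) ⊗[k] H)
            = (Q.comul (c * b i) ⊗ₜ[k] (1:H)) * ((1 : H ⊗[k] H) ⊗ₜ[k] d) := by
          rw [Algebra.TensorProduct.tmul_mul_tmul, mul_one, one_mul]
          rfl
        have hunit : (Algebra.TensorProduct.assoc k k k H H H) ((1 : H ⊗[k] H) ⊗ₜ[k] d)
            = (1:H) ⊗ₜ[k] ((1:H) ⊗ₜ[k] d) := by
          rw [Algebra.TensorProduct.one_def, Algebra.TensorProduct.assoc_tmul]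
        rw [hsplit, map_mul (Algebra.TensorProduct.assoc k k k H H H), hunit, ← mul_assoc,
          Fm_mul_unit, Gm_mul_unit, ← Km_apply]
      calc (∑ i : Module.Basis.ofVectorSpaceIndex k H, thetaB (k := k) x (b.coord i)
            (Gm Q (Fm Q (Q.Phi * (Algebra.TensorProduct.assoc k k k H H H)
              ((Algebra.TensorProduct.map Q.comul (AlgHom.id k H))
                ((c ⊗ₜ[k] d) * (b i ⊗ₜ[k] (1:H))))))))
          = ∑ i : Module.Basis.ofVectorSpaceIndex k H, thetaB (k := k) x (b.coord i)
              (((TensorProduct.map LinearMap.id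
                  ((LinearMap.mulLeft k (Q.beta * Q.S d)) ∘ₗ Q.S)) ∘ₗ (Km Q)) (c * b i)) := by
            exact Finset.sum_congr rfl fun i _ => by rw [step i]; rfl
        _ = ∑ i : Module.Basis.ofVectorSpaceIndex k H, thetaB (k := k) x
              ((b.coord i) ∘ₗ LinearMap.mulLeft k c)
              (((TensorProduct.map LinearMap.id
                  ((LinearMap.mulLeft k (Q.beta * Q.S d)) ∘ₗ Q.S)) ∘ₗ (Km Q)) (b i)) :=
            db x c _
        _ = Omega Q x (LinearMap.mul' k H (Gm Q (c ⊗ₜ[k] d))) := by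
            rw [Omega]
            refine Finset.sum_congr rfl fun i _ => ?_
            rw [thetaB_mulLeft, LinearMap.comp_apply, one_tmul_mul_mapS]
            rw [Gm_tmul, LinearMap.mul'_apply, hb]
  | add D₁ D₂ h₁ h₂ =>
      have expand : ∀ i : Module.Basis.ofVectorSpaceIndex k H,
          thetaB (k := k) x (b.coord i)
            (Gm Q (Fm Q (Q.Phi * (Algebra.TensorProduct.assoc k k k H H H)
              ((Algebra.TensorProduct.map Q.comul (AlgHom.id k H))
                ((D₁ + D₂) * (b i ⊗ₜ[k] (1:H)))))))
          = thetaB (k := k) x (b.coord i)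
              (Gm Q (Fm Q (Q.Phi * (Algebra.TensorProduct.assoc k k k H H H)
                ((Algebra.TensorProduct.map Q.comul (AlgHom.id k H))
                  (D₁ * (b i ⊗ₜ[k] (1:H)))))))
            + thetaB (k := k) x (b.coord i)
              (Gm Q (Fm Q (Q.Phi * (Algebra.TensorProduct.assoc k k k H H H)
                ((Algebra.TensorProduct.map Q.comul (AlgHom.id k H))
                  (D₂ * (b i ⊗ₜ[k] (1:H))))))) := by
        intro i
        rw [add_mul, map_add, map_add, mul_add, map_add, map_add, map_add]
      rw [Finset.sum_congr rfl fun i _ => expand i, Finset.sum_add_distrib, h₁, h₂,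
        map_add, map_add, Omega_add]

end QHAProofAux
namespace QHAProofAux

variable {k H : Type*} [Field k] [Ring H] [Algebra k H] [FiniteDimensional k H]
  (Q : QuasiHopfAlgebra k H)

lemma push (g e : H) :
    (g ⊗ₜ[k] (1:H)) * Q.Amap e
      = Gm Q (Fm Q (Q.Phi * (Algebra.TensorProduct.assoc k k k H H H)
          ((Algebra.TensorProduct.map Q.comul (AlgHom.id k H))
            (Q.comul g * (e ⊗ₜ[k] (1:H)))))) := by
  rw [Amap_eq, Gm_left_mul, Km_apply, Fm_M_mul (Q := Q) g
      (Q.Phi * (Algebra.TensorProduct.assoc k k k H H H) (Q.comul e ⊗ₜ[k] (1:H))) |>.symm]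
  congr 2
  rw [← mul_assoc, Q.quasi_coassoc g, mul_assoc,
    ← map_mul (Algebra.TensorProduct.assoc k k k H H H),
    map_mul (Algebra.TensorProduct.map Q.comul (AlgHom.id k H)),
    Algebra.TensorProduct.map_tmul]
  simp

lemma P_integral (g x : H) : g * Q.P x = Q.counit g • Q.P x := by
  have expand : g * Q.P x = ∑ i : Module.Basis.ofVectorSpaceIndex k H,
      thetaB (k := k) x ((Module.Basis.ofVectorSpace k H).coord i)
        (Gm Q (Fm Q (Q.Phi * (Algebra.TensorProduct.assoc k k k H H H)
          ((Algebra.TensorProduct.map Q.comul (AlgHom.id k H))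
            (Q.comul g * ((Module.Basis.ofVectorSpace k H) i ⊗ₜ[k] (1:H))))))) := by
    rw [P_expand, Finset.mul_sum]
    refine Finset.sum_congr rfl fun i _ => ?_
    rw [mul_thetaB, push]
  rw [expand, claim2]
  have har : LinearMap.mul' k H (Gm Q (Q.comul g)) = Q.counit g • Q.beta :=
    Q.antipode_right g
  rw [har, Omega_smul, Omega_beta]

lemma P_mem (x : H) : Q.P x ∈ Q.leftIntegrals := fun g => P_integral Q g x

end QHAProofAux
/-- `E(h* ↽ S⁻¹(h)) = μ(h) E(h*)`, where `E` is the Hausser–Nill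
projection onto the left cointegrals, characterized by
`⟨E(h*), h'⟩ = ⟨h*, S⁻¹(P(S h'))⟩`, and `μ` is the distinguished grouplike element. -/
theorem cointegral_projection_modular {k H : Type*} [Field k] [Ring H] [Algebra k H]
    [FiniteDimensional k H] (Q : QuasiHopfAlgebra k H)
    (Sinv : H →ₗ[k] H) (hS1 : ∀ a, Sinv (Q.S a) = a) (hS2 : ∀ a, Q.S (Sinv a) = a)
    (μ : H →ₐ[k] k) (hμ : ∀ t ∈ Q.leftIntegrals, ∀ h : H, t * h = μ h • t) :
    ∀ (f : Module.Dual k H) (h h' : H),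
      f (Sinv h * Sinv (Q.P (Q.S h'))) = μ h * f (Sinv (Q.P (Q.S h'))) := by
  intro f h h'
  set t : H := Q.P (Q.S h') with hts
  have ht : t ∈ Q.leftIntegrals := QHAProofAux.P_mem Q (Q.S h')
  have h1 : t * h = μ h • t := hμ t ht h
  have anti : Sinv h * Sinv t = Sinv (t * h) := by
    calc Sinv h * Sinv t = Sinv (Q.S (Sinv h * Sinv t)) := (hS1 _).symm
      _ = Sinv (t * h) := by rw [Q.S_mul, hS2, hS2]
  rw [anti, h1, map_smul, map_smul, smul_eq_mul]
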